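/- arXiv:0905.4217 — 2 statements merged into one kernel-verified Lean document; each statement's English description precedes it below -/
import Mathlib

section
/- Let M be a finitely generated abelian group and η : M → M a group endomorphism whose kernel is finite. Then the cokernel M/η(M) has cardinality at least that of ker η; in particular, if the cokernel is finite of cardinality equal to |ker η|, then any surjection from M/η(M) onto a group of cardinality |ker η| is an isomorphism. -/
set_option maxHeartbeats 2000000

/-- For a finitely generated abelian group `M` and an endomorphism `η` with finite
kernel, the cokernel has cardinality at least that of the kernel; in particular, if the
cokernel is finite of cardinality `|ker η|`, any surjection from it onto a group of
cardinality `|ker η|` is bijective. -/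
theorem stmt5 (M : Type*) [AddCommGroup M] [AddGroup.FG M] (η : M →+ M)
    (hker : Finite ↥η.ker) :
    Nat.card ↥η.ker ≤ Nat.card (M ⧸ η.range) ∧
    (∀ (H : Type) (_ : AddCommGroup H) (f : (M ⧸ η.range) →+ H),
      Finite (M ⧸ η.range) → Nat.card (M ⧸ η.range) = Nat.card ↥η.ker →
      Nat.card H = Nat.card ↥η.ker → Function.Surjective f → Function.Bijective f) := by
  classical
  haveI hMfin : Module.Finite ℤ M := Module.Finite.iff_addGroup_fg.mpr ‹AddGroup.FG M›
  set τ : Submodule ℤ M := Submodule.torsion ℤ M with hτdef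
  have mem_tor : ∀ x : M, (∃ n : ℤ, n ≠ 0 ∧ n • x = 0) → x ∈ τ := by
    rintro x ⟨n, hn, h⟩
    exact ⟨⟨n, mem_nonZeroDivisors_of_ne_zero hn⟩, h⟩
  have tor_mem : ∀ x : M, x ∈ τ → ∃ n : ℤ, n ≠ 0 ∧ n • x = 0 := by
    rintro x ⟨⟨n, hn⟩, h⟩
    exact ⟨n, nonZeroDivisors.ne_zero hn, h⟩
  have hker_tor : ∀ x : M, x ∈ η.ker → x ∈ τ := by
    intro x hx
    have h1 : IsOfFinAddOrder (⟨x, hx⟩ : ↥η.ker) := isOfFinAddOrder_of_finite _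
    obtain ⟨n, hn, hn0⟩ := h1.exists_nsmul_eq_zero
    have h2 : (n • x : M) = 0 := by simpa using congrArg Subtype.val hn0
    refine mem_tor x ⟨(n : ℤ), ?_, ?_⟩
    · exact_mod_cast hn.ne'
    · rw [natCast_zsmul]; exact h2
  have hmapsto : ∀ x ∈ τ, η x ∈ τ := by
    intro x hx
    obtain ⟨n, hn, h⟩ := tor_mem x hx
    exact mem_tor _ ⟨n, hn, by rw [← map_zsmul, h, map_zero]⟩
  have hpull : ∀ x : M, η x ∈ τ → x ∈ τ := by
    intro x hx
    obtain ⟨n, hn, h⟩ := tor_mem _ hx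
    have h2 : (n • x) ∈ η.ker := by
      rw [AddMonoidHom.mem_ker, map_zsmul, h]
    obtain ⟨m, hm, h3⟩ := tor_mem _ (hker_tor _ h2)
    exact mem_tor x ⟨m * n, mul_ne_zero hm hn, by rwa [mul_smul]⟩
  -- the induced map on the free quotient
  set η' : M →ₗ[ℤ] M := η.toIntLinearMap with hη'def
  have hle : τ ≤ τ.comap η' := fun x hx => hmapsto x hx
  set ηF : (M ⧸ τ) →ₗ[ℤ] (M ⧸ τ) := Submodule.mapQ τ τ η' hle with hηFdef
  have hcomm : ∀ x : M, ηF (Submodule.Quotient.mk x) = Submodule.Quotient.mk (η x) :=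
    fun x => rfl
  have hinj : Function.Injective ηF := by
    rw [← LinearMap.ker_eq_bot, eq_bot_iff]
    rintro y hy
    obtain ⟨x, rfl⟩ := Submodule.Quotient.mk_surjective τ y
    have h1 : η x ∈ τ := by
      rw [← Submodule.Quotient.mk_eq_zero τ, ← hcomm]
      exact hy
    simpa [Submodule.mem_bot, Submodule.Quotient.mk_eq_zero] using hpull x h1
  -- determinant trick
  obtain ⟨d, hd, hdmem⟩ :
      ∃ d : ℤ, d ≠ 0 ∧ ∀ y : M ⧸ τ, ∃ z : M ⧸ τ, ηF z = d • y := by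
    haveI : Module.Free ℤ (M ⧸ τ) := inferInstance
    let b := Module.Free.chooseBasis ℤ (M ⧸ τ)
    set A := LinearMap.toMatrix b b ηF with hAdef
    refine ⟨A.det, ?_, ?_⟩
    · intro h0
      obtain ⟨v, hv, hAv⟩ := Matrix.exists_mulVec_eq_zero_iff.mpr h0
      set x := b.equivFun.symm v with hxdef
      have h8 : ⇑(b.repr x) = v := by
        rw [← b.equivFun_apply, hxdef, b.equivFun.apply_symm_apply]
      have h9 : ηF x = 0 := by
        apply b.repr.injective
        apply DFunLike.coe_injective
        show ⇑(b.repr (ηF x)) = ⇑(b.repr (0 : M ⧸ τ))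
        rw [← LinearMap.toMatrix_mulVec_repr b b ηF x, h8, map_zero, ← hAdef, hAv]
        simp
      have h10 : x = 0 := hinj (by rw [h9, map_zero])
      apply hv
      rw [← b.equivFun.apply_symm_apply v, ← hxdef, h10, map_zero]
    · intro y
      refine ⟨Matrix.toLin b b A.adjugate y, ?_⟩
      have h1 : Matrix.toLin b b A = ηF := Matrix.toLin_toMatrix b b ηF
      conv_lhs => rw [← h1]
      rw [← Matrix.toLin_mul_apply, Matrix.mul_adjugate, map_smul, Matrix.toLin_one]
      simp
  -- cokernel is torsion
  have hcoktor : ∀ y : M ⧸ η.range, ∃ n : ℤ, n ≠ 0 ∧ n • y = 0 := by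
    intro y
    obtain ⟨x, rfl⟩ := QuotientAddGroup.mk'_surjective η.range y
    obtain ⟨z, hz⟩ := hdmem (Submodule.Quotient.mk x)
    obtain ⟨w, rfl⟩ := Submodule.Quotient.mk_surjective τ z
    rw [hcomm, ← Submodule.Quotient.mk_smul] at hz
    have h2 : η w - d • x ∈ τ := (Submodule.Quotient.eq τ).mp hz
    obtain ⟨m, hm, h3⟩ := tor_mem _ h2
    rw [smul_sub, sub_eq_zero] at h3
    refine ⟨m * d, mul_ne_zero hm hd, ?_⟩
    have h4 : ((m * d) • x : M) ∈ η.range := by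
      refine ⟨m • w, ?_⟩
      rw [map_zsmul, h3, mul_smul]
    rw [← map_zsmul (QuotientAddGroup.mk' η.range)]
    exact (QuotientAddGroup.eq_zero_iff _).mpr h4
  haveI hcokfin : Finite (M ⧸ η.range) := by
    apply AddCommGroup.finite_of_fg_torsion
    intro y
    obtain ⟨n, hn, h⟩ := hcoktor y
    refine isOfFinAddOrder_iff_nsmul_eq_zero.mpr ⟨n.natAbs, Int.natAbs_pos.mpr hn, ?_⟩
    have h5 : ((n.natAbs : ℤ)) • y = 0 := by
      rcases Int.natAbs_eq n with h' | h'
      · rw [← h', h]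
      · rw [← neg_neg ((n.natAbs : ℤ)), ← h', neg_smul, h, neg_zero]
    rwa [natCast_zsmul] at h5
  -- counting via the torsion subgroup
  set Tsub : AddSubgroup M := τ.toAddSubgroup with hTdef
  haveI hTfin : Finite ↥Tsub := by
    haveI : IsNoetherian ℤ M := isNoetherian_of_isNoetherianRing_of_finite ℤ M
    haveI : Module.Finite ℤ ↥τ := Module.Finite.iff_fg.mpr (IsNoetherian.noetherian τ)
    have htor : Module.IsTorsion ℤ ↥τ := by
      intro x
      obtain ⟨a, ha⟩ := x.2
      exact ⟨a, Subtype.ext (by simpa using ha)⟩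
    exact Module.finite_of_fg_torsion ↥τ htor
  have hkerle : η.ker ≤ Tsub := fun x hx => hker_tor x hx
  set φ : ↥Tsub →+ M := η.comp Tsub.subtype with hφdef
  have hφker : φ.ker = η.ker.addSubgroupOf Tsub := rfl
  have hφrange : φ.range = Tsub.map η := by
    rw [hφdef, AddMonoidHom.range_comp, AddSubgroup.range_subtype]
  have hmaple : Tsub.map η ≤ Tsub := by
    rintro x ⟨t, ht, rfl⟩
    exact hmapsto t ht
  have hkey : η.range ⊓ Tsub = Tsub.map η := by
    ext x
    constructor
    · rintro ⟨⟨y, rfl⟩, hx⟩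
      exact ⟨y, hpull y hx, rfl⟩
    · rintro ⟨t, ht, rfl⟩
      exact ⟨⟨t, rfl⟩, hmapsto t ht⟩
  haveI hφrfin : Finite ↥φ.range :=
    Finite.of_surjective φ.rangeRestrict φ.rangeRestrict_surjective
  have hφrpos : 0 < Nat.card ↥φ.range := Nat.card_pos
  have c1 : Nat.card ↥Tsub = Nat.card (↥Tsub ⧸ φ.ker) * Nat.card ↥φ.ker :=
    AddSubgroup.card_eq_card_quotient_mul_card_addSubgroup φ.ker
  have e1 : Nat.card (↥Tsub ⧸ φ.ker) = Nat.card ↥φ.range :=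
    Nat.card_congr (QuotientAddGroup.quotientKerEquivRange φ).toEquiv
  have e2 : Nat.card ↥φ.ker = Nat.card ↥η.ker := by
    rw [hφker]
    exact Nat.card_congr (AddSubgroup.addSubgroupOfEquivOfLe hkerle).toEquiv
  have c2 : Nat.card ↥Tsub =
      (η.range.relIndex Tsub) * Nat.card ↥(η.range.addSubgroupOf Tsub) :=
    AddSubgroup.card_eq_card_quotient_mul_card_addSubgroup (η.range.addSubgroupOf Tsub)
  have e3 : Nat.card ↥(η.range.addSubgroupOf Tsub) = Nat.card ↥φ.range := by
    rw [← AddSubgroup.inf_addSubgroupOf_right η.range Tsub, hkey, hφrange]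
    exact Nat.card_congr (AddSubgroup.addSubgroupOfEquivOfLe hmaple).toEquiv
  have hk_eq : Nat.card ↥η.ker = η.range.relIndex Tsub := by
    have hA : Nat.card ↥φ.range * Nat.card ↥η.ker = Nat.card ↥Tsub := by
      rw [← e1, ← e2]; exact c1.symm
    have hB : Nat.card ↥φ.range * (η.range.relIndex Tsub) = Nat.card ↥Tsub := by
      rw [mul_comm, ← e3]; exact c2.symm
    exact Nat.eq_of_mul_eq_mul_left hφrpos (hA.trans hB.symm)
  haveI : η.range.Normal := inferInstance
  have hdvd : η.range.relIndex Tsub ∣ η.range.index :=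
    AddSubgroup.relIndex_dvd_index_of_normal η.range Tsub
  have hidx : η.range.index = Nat.card (M ⧸ η.range) := rfl
  have hpos : 0 < Nat.card (M ⧸ η.range) := Nat.card_pos
  constructor
  · rw [hk_eq]
    exact Nat.le_of_dvd hpos (hidx ▸ hdvd)
  · intro H _ f _ h1 h2 hs
    rw [Nat.bijective_iff_surjective_and_card]
    exact ⟨hs, by rw [h1, h2]⟩
end

section
/- Let G, H, K be abelian groups with an exact sequence 0 → A → G →^φ G → H with im(induced map G → H) ⊆ H, where A is finite, G is finitely generated, and H is finite with |H| = |A|. Then the induced map G/φ(G) → H is surjective (hence bijective). -/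
/-- Counting argument: if `0 → A → G → G → H` is exact with `A = ker φ` finite, `G`
finitely generated, and `H` finite of cardinality `|A|`, then the induced map
`G/φ(G) → H` is surjective, hence bijective. -/
theorem stmt10 (G H : Type*) [AddCommGroup G] [AddGroup.FG G] [AddCommGroup H]
    [Finite H] (φ : G →+ G) (i : G →+ H)
    (hker : Finite ↥φ.ker)
    (hcard : Nat.card H = Nat.card ↥φ.ker)
    (hex : i.ker = φ.range)
    (hi : ∀ x ∈ (φ.range : AddSubgroup G), i x = 0) :
    Function.Surjective (QuotientAddGroup.lift φ.range i hi) ∧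
    Function.Bijective (QuotientAddGroup.lift φ.range i hi) := by
  set L := QuotientAddGroup.lift φ.range i hi with hL
  -- injectivity of the lift
  have hinj : Function.Injective L := by
    rw [injective_iff_map_eq_zero]
    intro x hx
    induction x using QuotientAddGroup.induction_on with
    | H g =>
      change i g = 0 at hx
      rw [QuotientAddGroup.eq_zero_iff, ← hex]
      exact hx
  have hfinQ : Finite (G ⧸ φ.range) := Finite.of_injective L hinj
  -- the torsion subgroup is finite
  set T : AddSubgroup G := AddCommGroup.torsion G with hT
  have hfinT : Finite ↥T := by
    have h1 : Module.Finite ℤ G := Module.Finite.iff_addGroup_fg.mpr ‹_›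
    have h3 : (Submodule.torsion ℤ G).FG := IsNoetherian.noetherian _
    have h4 : Module.Finite ℤ ↥(Submodule.torsion ℤ G) := Module.Finite.iff_fg.mpr h3
    have h5 : Finite ↥(Submodule.torsion ℤ G) :=
      Module.finite_of_fg_torsion _ (Submodule.torsion_isTorsion ..)
    rw [hT, ← Submodule.torsion_int]
    exact h5
  -- every element of the kernel is torsion
  have hKT : φ.ker ≤ T := by
    intro x hx
    have : IsOfFinAddOrder (⟨x, hx⟩ : ↥φ.ker) := isOfFinAddOrder_of_finite _
    obtain ⟨n, hn, hnx⟩ := isOfFinAddOrder_iff_nsmul_eq_zero.1 this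
    refine isOfFinAddOrder_iff_nsmul_eq_zero.2 ⟨n, hn, ?_⟩
    have : ((n • (⟨x, hx⟩ : ↥φ.ker) : ↥φ.ker) : G) = n • x := by simp
    rw [← this, hnx]; rfl
  -- comap φ T = T
  have hcomap : AddSubgroup.comap φ T = T := by
    ext g
    constructor
    · intro hg
      have hg' : IsOfFinAddOrder (φ g) := hg
      obtain ⟨n, hn, hng⟩ := (isOfFinAddOrder_iff_nsmul_eq_zero).1 hg'
      have : φ (n • g) = 0 := by rw [map_nsmul, hng]
      have hmem : n • g ∈ φ.ker := this
      have htor : IsOfFinAddOrder (n • g) := hKT hmem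
      obtain ⟨m, hm, hmg⟩ := (isOfFinAddOrder_iff_nsmul_eq_zero).1 htor
      refine (isOfFinAddOrder_iff_nsmul_eq_zero).2 ⟨m * n, Nat.mul_pos hm hn, ?_⟩
      rw [mul_smul, hmg]
    · intro hg
      have hg' : IsOfFinAddOrder g := hg
      obtain ⟨n, hn, hng⟩ := isOfFinAddOrder_iff_nsmul_eq_zero.1 hg'
      have : IsOfFinAddOrder (φ g) :=
        isOfFinAddOrder_iff_nsmul_eq_zero.2 ⟨n, hn, by rw [← map_nsmul, hng, map_zero]⟩
      exact this
  have hinf : φ.range ⊓ T = AddSubgroup.map φ T := by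
    rw [← AddSubgroup.map_comap_eq, hcomap]
  -- the restriction of φ to T
  set f : ↥T →+ G := φ.comp T.subtype with hf
  have hrange : f.range = AddSubgroup.map φ T := by
    ext x
    simp [hf, AddSubgroup.mem_map, AddMonoidHom.mem_range, SetLike.exists]
  -- card T = card (range f) * card (ker f)
  have hcardT : Nat.card ↥T = Nat.card ↥f.range * Nat.card ↥f.ker := by
    rw [AddSubgroup.card_eq_card_quotient_mul_card_addSubgroup f.ker]
    congr 1
    exact Nat.card_congr (QuotientAddGroup.quotientKerEquivRange f).toEquiv
  -- ker f ≃ ker φ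
  have hkerf : Nat.card ↥f.ker = Nat.card ↥φ.ker := by
    refine Nat.card_congr ⟨fun x => ⟨x.1.1, x.2⟩, fun x => ⟨⟨x.1, hKT x.2⟩, x.2⟩, ?_, ?_⟩
    · intro x; rfl
    · intro x; rfl
  -- the subgroup of T corresponding to φ.range
  have hcardS : Nat.card ↥(φ.range.addSubgroupOf T) = Nat.card ↥f.range := by
    rw [← AddSubgroup.inf_addSubgroupOf_right, hinf, ← hrange]
    exact Nat.card_congr (AddSubgroup.addSubgroupOfEquivOfLe (hrange ▸ hinf ▸ inf_le_right)).toEquiv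
  have hSindex : Nat.card ↥(φ.range.addSubgroupOf T) * (φ.range.addSubgroupOf T).index
      = Nat.card ↥T := AddSubgroup.card_mul_index _
  have hTpos : 0 < Nat.card ↥T := Nat.card_pos
  have hrpos : 0 < Nat.card ↥f.range := by
    rcases Nat.eq_zero_or_pos (Nat.card ↥f.range) with h | h
    · rw [hcardT, h, zero_mul] at hTpos; exact absurd hTpos (lt_irrefl 0)
    · exact h
  -- relindex = card ker φ
  have hrel : φ.range.relIndex T = Nat.card ↥φ.ker := by
    have : Nat.card ↥f.range * (φ.range.addSubgroupOf T).index
        = Nat.card ↥f.range * Nat.card ↥φ.ker := by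
      rw [← hcardS, hSindex, hcardT, hkerf, hcardS]
    exact Nat.eq_of_mul_eq_mul_left hrpos this
  -- relindex divides index
  have hdvd : φ.range.relIndex T ∣ φ.range.index :=
    AddSubgroup.relIndex_dvd_index_of_normal _ _
  have hidx : φ.range.index = Nat.card (G ⧸ φ.range) := AddSubgroup.index_eq_card _
  have hidxpos : 0 < φ.range.index := by rw [hidx]; exact Nat.card_pos
  have hge : Nat.card ↥φ.ker ≤ Nat.card (G ⧸ φ.range) := by
    rw [← hidx, ← hrel]; exact Nat.le_of_dvd hidxpos hdvd
  have hle : Nat.card (G ⧸ φ.range) ≤ Nat.card H := Nat.card_le_card_of_injective L hinj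
  have hcards : Nat.card (G ⧸ φ.range) = Nat.card H := le_antisymm hle (hcard ▸ hge)
  have hbij : Function.Bijective L :=
    (Nat.bijective_iff_injective_and_card L).2 ⟨hinj, hcards⟩
  exact ⟨hbij.2, hbij⟩
end
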